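/- If (A, dom, 𝕀) ∈ C_DG, then 𝕀(rel) is tf_D-compatible with respect to the policy ↝ of the downgrader architecture DG; that is, for all α, β ∈ A*, if tf_D^{↝}(α) = tf_D^{↝}(β) then 𝕀(rel)(α, a) = 𝕀(rel)(β, a) for all a ∈ A with dom(a) = D. -/
import Mathlib


structure Machine (S A D O : Type) where
  s0 : S
  step : S → A → S
  dom : A → D
  obs : D → S → O

namespace Machine

def run {S A D O : Type} (M : Machine S A D O) (α : List A) : S :=
  α.foldl M.step M.s0

end Machine
/-- An extended architecture: `edge u v = none` means no edge, `edge u v = some none`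
means an edge labelled `⊤`, and `edge u v = some (some f)` means an edge labelled by
the filter-function name `f`.  There is at most one label per ordered pair by
construction, and the relation is reflexive with label `⊤`. -/
structure ExtArch (D L : Type) where
  edge : D → D → Option (Option L)
  refl : ∀ u, edge u u = some none

/-- Values of the `tf` function and of filter-function interpretations:
`eps` is the empty value ε, `base v` an arbitrary basic value, and
`pair σ a` the pair `(σ, a)` of a `tf` value and an action. -/
inductive TFVal (A V : Type) where
  | eps : TFVal A V
  | base : V → TFVal A V
  | pair : List (TFVal A V) → A → TFVal A V

/-- `σ ⌢ x`: appends `x` as a single new last element unless `x = ε`. -/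
def snoc' {A V : Type} (σ : List (TFVal A V)) : TFVal A V → List (TFVal A V)
  | .eps => σ
  | x => σ ++ [x]

/-- `tf`, computed on the reversed action sequence. -/
def tfR {A D L V : Type} (Arch : ExtArch D L) (dm : A → D)
    (I : L → List A → A → TFVal A V) : List A → D → List (TFVal A V)
  | [], _ => []
  | a :: ρ, u =>
    match Arch.edge (dm a) u with
    | none => tfR Arch dm I ρ u
    | some none => tfR Arch dm I ρ u ++ [TFVal.pair (tfR Arch dm I ρ (dm a)) a]
    | some (some f) => snoc' (tfR Arch dm I ρ u) (I f ρ.reverse a)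

/-- `tf Arch dm I α u` : maximal information domain `u` is permitted to have after `α`. -/
def tf {A D L V : Type} (Arch : ExtArch D L) (dm : A → D)
    (I : L → List A → A → TFVal A V) (α : List A) (u : D) : List (TFVal A V) :=
  tfR Arch dm I α.reverse u

/-- `inF Arch dm I α a u` : the information `in_{dom(a),u}(α, a)` transmitted to `u`
when action `a` is performed after `α`. -/
def inF {A D L V : Type} (Arch : ExtArch D L) (dm : A → D)
    (I : L → List A → A → TFVal A V) (α : List A) (a : A) (u : D) : TFVal A V :=
  match Arch.edge (dm a) u with
  | none => TFVal.eps
  | some none => TFVal.pair (tf Arch dm I α (dm a)) a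
  | some (some f) => I f α a
/-- The five domains of the downgrader architecture `DG` (`Dg` is the
downgrader `D`, `Lo` the low-security domain `L`). -/
inductive DGDom where
  | C : DGDom
  | P : DGDom
  | H : DGDom
  | Dg : DGDom
  | Lo : DGDom
deriving DecidableEq

/-- The downgrader extended architecture: reflexive `⊤`-edges, `C ↝_⊤ H`,
`P ↝_⊤ H`, `H ↝_⊤ D` and `D ↝_rel L` (the label set is `Unit`, with `()`
standing for `rel`). -/
def DGArch : ExtArch DGDom Unit where
  edge u v :=
    match u, v with
    | .C, .C => some none
    | .P, .P => some none
    | .H, .H => some none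
    | .Dg, .Dg => some none
    | .Lo, .Lo => some none
    | .C, .H => some none
    | .P, .H => some none
    | .H, .Dg => some none
    | .Dg, .Lo => some (some ())
    | _, _ => none
  refl u := by cases u <;> rfl

/-- The policy `↝′`: `(u,v,f) ∈ ↝′` iff `f = ⊤` and either `u = v = C` or
there is an edge `(u,v,g)` in `DG` with `{u,v} ⊆ {P,H,D,L}`. -/
def DGArch' : ExtArch DGDom Unit where
  edge u v :=
    if (u = DGDom.C ∧ v = DGDom.C) ∨
        ((DGArch.edge u v).isSome = true ∧ u ≠ DGDom.C ∧ v ≠ DGDom.C)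
    then some none else none
  refl u := by cases u <;> decide

/-- Membership in the downgrader architectural specification `C_DG`: the
filter function `rel` transmits `(tf_D^{↝′}(α), a)`. -/
def memCDG {A V : Type} (dm : A → DGDom) (I : Unit → List A → A → TFVal A V) :
    Prop :=
  ∀ (α : List A) (a : A), dm a = DGDom.Dg →
    I () α a = TFVal.pair (tf DGArch' dm I α DGDom.Dg) a

mutual
/-- Transform a `tf_H^{DG}` entry into a `tf_H^{↝′}` entry (dropping `C`-entries). -/
def trHV {A V : Type} (dm : A → DGDom) : TFVal A V → Option (TFVal A V)
  | .pair σ a =>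
    match dm a with
    | .C => none
    | .H => some (.pair (trHL dm σ) a)
    | _ => some (.pair σ a)
  | x => some x
/-- Transform `tf_H^{DG}` into `tf_H^{↝′}`. -/
def trHL {A V : Type} (dm : A → DGDom) : List (TFVal A V) → List (TFVal A V)
  | [] => []
  | x :: l =>
    match trHV dm x with
    | none => trHL dm l
    | some y => y :: trHL dm l
/-- Transform a `tf_D^{DG}` entry into a `tf_D^{↝′}` entry. -/
def trDV {A V : Type} (dm : A → DGDom) : TFVal A V → TFVal A V
  | .pair σ a =>
    match dm a with
    | .Dg => .pair (trDL dm σ) a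
    | .H => .pair (trHL dm σ) a
    | _ => .pair σ a
  | x => x
/-- Transform `tf_D^{DG}` into `tf_D^{↝′}`. -/
def trDL {A V : Type} (dm : A → DGDom) : List (TFVal A V) → List (TFVal A V)
  | [] => []
  | x :: l => trDV dm x :: trDL dm l
end

theorem trHL_append {A V : Type} (dm : A → DGDom) (l1 l2 : List (TFVal A V)) :
    trHL dm (l1 ++ l2) = trHL dm l1 ++ trHL dm l2 := by
  induction l1 with
  | nil => simp [trHL]
  | cons x l ih =>
    simp only [List.cons_append, trHL, ih]
    cases trHV dm x <;> simp [ih]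

theorem trDL_append {A V : Type} (dm : A → DGDom) (l1 l2 : List (TFVal A V)) :
    trDL dm (l1 ++ l2) = trDL dm l1 ++ trDL dm l2 := by
  induction l1 with
  | nil => simp [trDL]
  | cons x l ih => simp [trDL, ih]

theorem tfR_cons_none {A D L V : Type} (Arch : ExtArch D L) (dm : A → D)
    (I : L → List A → A → TFVal A V) (a : A) (ρ : List A) (u : D)
    (h : Arch.edge (dm a) u = none) :
    tfR Arch dm I (a :: ρ) u = tfR Arch dm I ρ u := by
  simp [tfR, h]

theorem tfR_cons_top {A D L V : Type} (Arch : ExtArch D L) (dm : A → D)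
    (I : L → List A → A → TFVal A V) (a : A) (ρ : List A) (u : D)
    (h : Arch.edge (dm a) u = some none) :
    tfR Arch dm I (a :: ρ) u
      = tfR Arch dm I ρ u ++ [TFVal.pair (tfR Arch dm I ρ (dm a)) a] := by
  simp [tfR, h]

theorem tfR_C {A V : Type} (dm : A → DGDom) (I : Unit → List A → A → TFVal A V)
    (ρ : List A) :
    tfR DGArch dm I ρ DGDom.C = tfR DGArch' dm I ρ DGDom.C := by
  induction ρ with
  | nil => rfl
  | cons a ρ ih =>
    rcases h : dm a
    · rw [tfR_cons_top _ _ _ _ _ _ (by rw [h]; decide),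
        tfR_cons_top _ _ _ _ _ _ (by rw [h]; decide), h, ih]
    · rw [tfR_cons_none _ _ _ _ _ _ (by rw [h]; decide),
        tfR_cons_none _ _ _ _ _ _ (by rw [h]; decide), ih]
    · rw [tfR_cons_none _ _ _ _ _ _ (by rw [h]; decide),
        tfR_cons_none _ _ _ _ _ _ (by rw [h]; decide), ih]
    · rw [tfR_cons_none _ _ _ _ _ _ (by rw [h]; decide),
        tfR_cons_none _ _ _ _ _ _ (by rw [h]; decide), ih]
    · rw [tfR_cons_none _ _ _ _ _ _ (by rw [h]; decide),
        tfR_cons_none _ _ _ _ _ _ (by rw [h]; decide), ih]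

theorem tfR_P {A V : Type} (dm : A → DGDom) (I : Unit → List A → A → TFVal A V)
    (ρ : List A) :
    tfR DGArch dm I ρ DGDom.P = tfR DGArch' dm I ρ DGDom.P := by
  induction ρ with
  | nil => rfl
  | cons a ρ ih =>
    rcases h : dm a
    · rw [tfR_cons_none _ _ _ _ _ _ (by rw [h]; decide),
        tfR_cons_none _ _ _ _ _ _ (by rw [h]; decide), ih]
    · rw [tfR_cons_top _ _ _ _ _ _ (by rw [h]; decide),
        tfR_cons_top _ _ _ _ _ _ (by rw [h]; decide), h, ih]
    · rw [tfR_cons_none _ _ _ _ _ _ (by rw [h]; decide),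
        tfR_cons_none _ _ _ _ _ _ (by rw [h]; decide), ih]
    · rw [tfR_cons_none _ _ _ _ _ _ (by rw [h]; decide),
        tfR_cons_none _ _ _ _ _ _ (by rw [h]; decide), ih]
    · rw [tfR_cons_none _ _ _ _ _ _ (by rw [h]; decide),
        tfR_cons_none _ _ _ _ _ _ (by rw [h]; decide), ih]

theorem tfR_H {A V : Type} (dm : A → DGDom) (I : Unit → List A → A → TFVal A V)
    (ρ : List A) :
    trHL dm (tfR DGArch dm I ρ DGDom.H) = tfR DGArch' dm I ρ DGDom.H := by
  induction ρ with
  | nil => rfl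
  | cons a ρ ih =>
    rcases h : dm a
    · rw [tfR_cons_top _ _ _ _ _ _ (by rw [h]; decide),
        tfR_cons_none _ _ _ _ _ _ (by rw [h]; decide),
        trHL_append, ih, h]
      simp [trHL, trHV, h]
    · rw [tfR_cons_top _ _ _ _ _ _ (by rw [h]; decide),
        tfR_cons_top _ _ _ _ _ _ (by rw [h]; decide),
        trHL_append, ih, h, tfR_P]
      simp [trHL, trHV, h]
    · rw [tfR_cons_top _ _ _ _ _ _ (by rw [h]; decide),
        tfR_cons_top _ _ _ _ _ _ (by rw [h]; decide),
        trHL_append, h]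
      simp [trHL, trHV, h, ih]
    · rw [tfR_cons_none _ _ _ _ _ _ (by rw [h]; decide),
        tfR_cons_none _ _ _ _ _ _ (by rw [h]; decide), ih]
    · rw [tfR_cons_none _ _ _ _ _ _ (by rw [h]; decide),
        tfR_cons_none _ _ _ _ _ _ (by rw [h]; decide), ih]

theorem tfR_D {A V : Type} (dm : A → DGDom) (I : Unit → List A → A → TFVal A V)
    (ρ : List A) :
    trDL dm (tfR DGArch dm I ρ DGDom.Dg) = tfR DGArch' dm I ρ DGDom.Dg := by
  induction ρ with
  | nil => rfl
  | cons a ρ ih =>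
    rcases h : dm a
    · rw [tfR_cons_none _ _ _ _ _ _ (by rw [h]; decide),
        tfR_cons_none _ _ _ _ _ _ (by rw [h]; decide), ih]
    · rw [tfR_cons_none _ _ _ _ _ _ (by rw [h]; decide),
        tfR_cons_none _ _ _ _ _ _ (by rw [h]; decide), ih]
    · rw [tfR_cons_top _ _ _ _ _ _ (by rw [h]; decide),
        tfR_cons_top _ _ _ _ _ _ (by rw [h]; decide),
        trDL_append, ih, h]
      simp [trDL, trDV, h, tfR_H]
    · rw [tfR_cons_top _ _ _ _ _ _ (by rw [h]; decide),
        tfR_cons_top _ _ _ _ _ _ (by rw [h]; decide),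
        trDL_append, h]
      simp [trDL, trDV, h, ih]
    · rw [tfR_cons_none _ _ _ _ _ _ (by rw [h]; decide),
        tfR_cons_none _ _ _ _ _ _ (by rw [h]; decide), ih]

/-- for interpretations in `C_DG`, `𝕀(rel)` is `tf_D`-compatible
with respect to the policy of `DG`. -/
theorem statement9 {A V : Type} (dm : A → DGDom)
    (I : Unit → List A → A → TFVal A V) (hI : memCDG dm I) :
    ∀ (α β : List A),
      tf DGArch dm I α DGDom.Dg = tf DGArch dm I β DGDom.Dg →
        ∀ a : A, dm a = DGDom.Dg → I () α a = I () β a := by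
  intro α β hαβ a ha
  rw [hI α a ha, hI β a ha]
  have : tf DGArch' dm I α DGDom.Dg = tf DGArch' dm I β DGDom.Dg := by
    unfold tf at hαβ ⊢
    rw [← tfR_D, ← tfR_D, hαβ]
  rw [this]
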